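/- arXiv:2306.16929 — 2 statements merged into one kernel-verified Lean document; each statement's English description precedes it below -/
import Mathlib

section
/- For positive integer $c$ and integers $m,n$, the Kloosterman sum satisfies the Selberg identity $S(m,n;c)=\sum_{d\mid(m,n,c)} d\, S(mn/d^2, 1; c/d)$, where the sum runs over positive divisors $d$ of $\gcd(m,n,c)$. -/
open Finset

noncomputable def e (c : ℕ) (x : ℤ) : ℂ := Complex.exp (2 * Real.pi * Complex.I * x / c)

noncomputable def Kl (m n : ℤ) (c : ℕ) : ℂ :=
  ∑ a ∈ (Finset.range c).filter (fun a => Nat.Coprime a c),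
    e c (m * a + n * (((a : ZMod c)⁻¹).val : ℤ))

noncomputable def Xi (k m n : ℤ) (c : ℕ) : ℂ :=
  ∑ x ∈ Finset.range c, ∑ y ∈ Finset.range c,
    if ((x : ℤ) * y) % c = k % c then e c (m * x + n * y) else 0

lemma sel_e_add (c : ℕ) (x y : ℤ) : e c (x + y) = e c x * e c y := by
  simp only [e, ← Complex.exp_add]
  congr 1
  push_cast
  ring

lemma sel_e_mul_c (c : ℕ) (hc : 0 < c) (t : ℤ) : e c ((c : ℤ) * t) = 1 := by
  have hc' : (c : ℂ) ≠ 0 := Nat.cast_ne_zero.mpr hc.ne'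
  have : (2 * (Real.pi:ℂ) * Complex.I * ((c:ℤ) * t : ℤ) / c) = (t : ℤ) * (2 * Real.pi * Complex.I) := by
    push_cast; field_simp
  rw [e, this, Complex.exp_int_mul_two_pi_mul_I]

lemma sel_e_congr (c : ℕ) (hc : 0 < c) {x y : ℤ} (h : x ≡ y [ZMOD c]) : e c x = e c y := by
  obtain ⟨t, ht⟩ := Int.ModEq.dvd h
  have hx : x = y + (c:ℤ) * (-t) := by rw [mul_neg, ← ht]; ring
  rw [hx, sel_e_add, sel_e_mul_c c hc, mul_one]

lemma sel_e_div (c g : ℕ) (hg : g ∣ c) (hgpos : 0 < g) (z : ℤ) :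
    e c ((g : ℤ) * z) = e (c / g) z := by
  obtain ⟨c', rfl⟩ := hg
  rw [Nat.mul_div_cancel_left _ hgpos]
  by_cases hc' : c' = 0
  · simp [hc', e]
  simp only [e]
  congr 1
  have h1 : (g:ℂ) ≠ 0 := Nat.cast_ne_zero.mpr hgpos.ne'
  have h2 : (c':ℂ) ≠ 0 := Nat.cast_ne_zero.mpr hc'
  push_cast
  field_simp

-- geometric sum
lemma sel_sum_e (g : ℕ) (hg : 0 < g) (j : ℤ) :
    ∑ s ∈ Finset.range g, e g (j * s) = if (g:ℤ) ∣ j then (g:ℂ) else 0 := by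
  have he : ∀ s : ℕ, e g (j * s) = (e g j) ^ s := by
    intro s
    induction s with
    | zero => simp [e]
    | succ k ih => push_cast; rw [show j * ((k:ℤ)+1) = j * k + j by ring, sel_e_add, ih, pow_succ]
  simp only [he]
  split_ifs with h
  · obtain ⟨j', rfl⟩ := h
    rw [sel_e_mul_c g hg]
    simp
  · have hne : e g j ≠ 1 := by
      intro h1
      rw [e, Complex.exp_eq_one_iff] at h1
      obtain ⟨t, ht⟩ := h1
      have hg' : (g : ℂ) ≠ 0 := Nat.cast_ne_zero.mpr hg.ne'
      have hpi : (2 * (Real.pi:ℂ) * Complex.I) ≠ 0 := by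
        simp [Real.pi_ne_zero, Complex.I_ne_zero]
      have hjc : (j : ℂ) = (t : ℂ) * g := by
        field_simp at ht
        refine mul_left_cancel₀ hpi ?_
        rw [ht]; ring
      have hj : j = t * g := by exact_mod_cast hjc
      exact h ⟨t, by rw [hj]; ring⟩
    rw [geom_sum_eq hne]
    have : e g j ^ g = 1 := by
      have : ∀ s:ℕ, e g j ^ s = e g (j * s) := fun s => (he s).symm
      rw [this g, mul_comm, sel_e_mul_c g hg]
    rw [this]
    simp

lemma sel_zmod_inv_inv {c : ℕ} (a : ZMod c) (ha : IsUnit a) : a⁻¹⁻¹ = a := by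
  have h1 : a⁻¹ * a = 1 := ZMod.inv_mul_of_unit a ha
  have h2 : IsUnit a⁻¹ := IsUnit.of_mul_eq_one a h1
  have h3 : a⁻¹⁻¹ * a⁻¹ = 1 := ZMod.inv_mul_of_unit _ h2
  calc a⁻¹⁻¹ = a⁻¹⁻¹ * (a⁻¹ * a) := by rw [h1, mul_one]
    _ = (a⁻¹⁻¹ * a⁻¹) * a := by ring
    _ = a := by rw [h3, one_mul]

lemma sel_natCast_val_self {c : ℕ} [NeZero c] (x : ZMod c) : ((x.val : ℕ) : ZMod c) = x := by
  simp [ZMod.natCast_val, ZMod.cast_id]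

lemma sel_Kl_symm (A B : ℤ) (c : ℕ) : Kl A B c = Kl B A c := by
  rcases Nat.eq_zero_or_pos c with rfl | hc
  · simp [Kl]
  haveI : NeZero c := ⟨hc.ne'⟩
  unfold Kl
  refine Finset.sum_nbij' (fun a => ((a : ZMod c)⁻¹).val) (fun a => ((a : ZMod c)⁻¹).val)
    ?_ ?_ ?_ ?_ ?_
  all_goals intro a ha
  pick_goal 5
  · -- value equality
    simp only [Finset.mem_filter, Finset.mem_range] at ha
    have hu : IsUnit ((a : ZMod c)) := (ZMod.isUnit_iff_coprime a c).mpr ha.2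
    have key : (((((a : ZMod c)⁻¹).val : ℕ) : ZMod c))⁻¹ = (a : ZMod c) := by
      rw [sel_natCast_val_self, sel_zmod_inv_inv _ hu]
    rw [key]
    rw [ZMod.val_natCast_of_lt ha.1]
    ring_nf
  all_goals simp only [Finset.mem_filter, Finset.mem_range] at ha ⊢
  case refine_1 | refine_2 =>
    have hu : IsUnit ((a : ZMod c)) := (ZMod.isUnit_iff_coprime a c).mpr ha.2
    have hui : IsUnit ((a : ZMod c))⁻¹ :=
      IsUnit.of_mul_eq_one _ (ZMod.inv_mul_of_unit _ hu)
    constructor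
    · exact ZMod.val_lt _
    · have : IsUnit (((((a : ZMod c)⁻¹).val : ℕ)) : ZMod c) := by
        rwa [sel_natCast_val_self]
      exact (ZMod.isUnit_iff_coprime _ c).mp this
  case refine_3 | refine_4 =>
    have hu : IsUnit ((a : ZMod c)) := (ZMod.isUnit_iff_coprime a c).mpr ha.2
    rw [sel_natCast_val_self, sel_zmod_inv_inv _ hu, ZMod.val_natCast_of_lt ha.1]

lemma sel_inner_sum (g c' : ℕ) (hg : 0 < g) (hc' : 0 < c') (k m n : ℤ)
    (a : ℕ) (ha : a < c') (hcop : Nat.Coprime a c') :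
    ∑ y ∈ Finset.range (g * c'),
      (if (((g * a : ℕ) : ℤ) * (y : ℕ)) % (g * c' : ℕ) = k % (g * c' : ℕ)
        then e (g * c') (m * ((g * a : ℕ) : ℤ) + n * (y : ℕ)) else 0)
    = if (g:ℤ) ∣ k ∧ (g:ℤ) ∣ n then
        (g:ℂ) * e c' (m * a + (k * n / (g:ℤ)^2) * (((a : ZMod c')⁻¹).val : ℤ))
      else 0 := by
  set c : ℕ := g * c' with hc
  have hcpos : 0 < c := by positivity
  haveI : NeZero c' := ⟨hc'.ne'⟩
  by_cases hk : (g:ℤ) ∣ k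
  · -- main case
    obtain ⟨k', rfl⟩ := hk
    set ainv : ℕ := ((a : ZMod c')⁻¹).val with hainv_def
    have hainv1 : ((ainv : ℤ) * a) ≡ 1 [ZMOD c'] := by
      have hu : IsUnit ((a : ZMod c')) := (ZMod.isUnit_iff_coprime a c').mpr hcop
      have h1 : ((a : ZMod c'))⁻¹ * (a : ZMod c') = 1 := ZMod.inv_mul_of_unit _ hu
      have h2 : (((ainv : ℤ) * a : ℤ) : ZMod c') = ((1 : ℤ) : ZMod c') := by
        push_cast
        rw [ZMod.natCast_val, ZMod.cast_id, h1]
      exact (ZMod.intCast_eq_intCast_iff _ _ _).mp h2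
    set y0 : ℤ := k' * ainv with hy0
    set r0 : ℕ := (y0 % c').toNat with hr0
    have hy0r0 : (r0 : ℤ) = y0 % c' := by
      rw [hr0, Int.toNat_of_nonneg (Int.emod_nonneg _ (by exact_mod_cast hc'.ne'))]
    have hr0lt : r0 < c' := by
      have := Int.emod_lt_of_pos y0 (b := (c':ℤ)) (by exact_mod_cast hc')
      omega
    have hr0mod : (r0 : ℤ) ≡ y0 [ZMOD c'] := by
      rw [Int.ModEq, hy0r0, Int.emod_emod_of_dvd _ dvd_rfl]
    -- condition characterization
    have cond_iff : ∀ y : ℕ, ((((g * a : ℕ) : ℤ) * (y : ℕ)) % c = ((g:ℤ) * k') % c ↔ y % c' = r0) := by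
      intro y
      have step1 : ((((g * a : ℕ) : ℤ) * (y : ℕ)) % c = ((g:ℤ) * k') % c) ↔ ((a * y : ℤ) ≡ k' [ZMOD c']) := by
        constructor
        · intro h
          have h' : ((g:ℤ) * (a * y)) ≡ (g:ℤ) * k' [ZMOD (g:ℤ) * c'] := by
            have : (((g * a : ℕ) : ℤ) * (y : ℕ)) ≡ (g:ℤ) * k' [ZMOD c] := h
            push_cast at this ⊢
            calc ((g:ℤ) * (a * y)) = ((g:ℤ) * a * y) := by ring
              _ ≡ (g:ℤ) * k' [ZMOD (g:ℤ)*c'] := this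
          have hd := (Int.modEq_iff_dvd.mp h')
          rw [Int.modEq_iff_dvd]
          have : (g:ℤ) * k' - (g:ℤ) * (a*y) = (g:ℤ) * (k' - a*y) := by ring
          rw [this] at hd
          exact (mul_dvd_mul_iff_left (by exact_mod_cast hg.ne' : (g:ℤ) ≠ 0)).mp hd
        · intro h
          have hd := Int.modEq_iff_dvd.mp h
          have h' : ((g:ℤ)*c') ∣ ((g:ℤ)*k' - (g:ℤ)*(a*y)) := by
            have : (g:ℤ)*k' - (g:ℤ)*(a*y) = (g:ℤ) * (k' - a*y) := by ring
            rw [this]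
            exact mul_dvd_mul_left _ hd
          have : (((g * a : ℕ) : ℤ) * (y : ℕ)) ≡ (g:ℤ) * k' [ZMOD c] := by
            rw [Int.modEq_iff_dvd]
            push_cast
            convert h' using 2 <;> push_cast [hc] <;> ring
          exact this
      have step2 : ((a * y : ℤ) ≡ k' [ZMOD c']) ↔ ((y:ℤ) ≡ y0 [ZMOD c']) := by
        constructor
        · intro h
          calc (y:ℤ) = 1 * y := (one_mul _).symm
            _ ≡ ((ainv:ℤ) * a) * y [ZMOD c'] := (hainv1.symm).mul_right _
            _ = (ainv:ℤ) * (a * y) := by ring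
            _ ≡ (ainv:ℤ) * k' [ZMOD c'] := h.mul_left _
            _ = y0 := by rw [hy0]; ring
        · intro h
          calc (a * y : ℤ) ≡ a * y0 [ZMOD c'] := h.mul_left _
            _ = (ainv * a : ℤ) * k' := by rw [hy0]; ring
            _ ≡ 1 * k' [ZMOD c'] := hainv1.mul_right _
            _ = k' := one_mul _
      rw [step1, step2]
      constructor
      · intro h
        have h2 : (y:ℤ) % c' = (r0:ℤ) % c' := by
          rw [Int.ModEq] at h
          rw [h, hy0r0, Int.emod_emod_of_dvd _ dvd_rfl]
        have h3 : ((y % c' : ℕ) : ℤ) = ((r0 % c' : ℕ) : ℤ) := by push_cast; omega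
        have := Nat.cast_inj (R := ℤ) |>.mp h3
        rwa [Nat.mod_eq_of_lt hr0lt] at this
      · intro h
        calc (y:ℤ) ≡ (y % c' : ℕ) [ZMOD c'] := by
              rw [Int.ModEq]; push_cast; rw [Int.emod_emod_of_dvd _ dvd_rfl]
          _ = (r0:ℤ) := by rw [h]
          _ ≡ y0 [ZMOD c'] := hr0mod
    -- reindex
    have reindex : ∑ y ∈ Finset.range c,
        (if (((g * a : ℕ) : ℤ) * (y : ℕ)) % c = ((g:ℤ)*k') % c
          then e c (m * ((g * a : ℕ) : ℤ) + n * (y : ℕ)) else 0)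
        = ∑ s ∈ Finset.range g, e c (m * ((g * a : ℕ) : ℤ) + n * ((r0 + s * c' : ℕ) : ℤ)) := by
      rw [← Finset.sum_filter]
      refine Finset.sum_nbij' (fun y => y / c') (fun s => r0 + s * c') ?_ ?_ ?_ ?_ ?_
      · intro y hy
        simp only [Finset.mem_filter, Finset.mem_range] at hy
        rw [Finset.mem_range]
        refine Nat.div_lt_of_lt_mul ?_
        rw [mul_comm c' g]
        exact hy.1
      · intro s hs
        simp only [Finset.mem_range] at hs
        simp only [Finset.mem_filter, Finset.mem_range]
        constructor
        · have : r0 + s * c' < c' + s * c' := by omega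
          have h2 : c' + s * c' = (s+1) * c' := by ring
          have h3 : (s+1) * c' ≤ g * c' := Nat.mul_le_mul_right _ (by omega)
          omega
        · rw [cond_iff]
          rw [Nat.add_mul_mod_self_right, Nat.mod_eq_of_lt hr0lt]
      · intro y hy
        simp only [Finset.mem_filter, Finset.mem_range] at hy
        have h := (cond_iff y).mp hy.2
        have h2 := Nat.div_add_mod y c'
        have h3 := Nat.mul_comm c' (y / c')
        show r0 + y / c' * c' = y
        omega
      · intro s hs
        simp only [Finset.mem_range] at hs
        show (r0 + s * c') / c' = s
        rw [Nat.add_mul_div_right _ _ hc', Nat.div_eq_of_lt hr0lt, zero_add]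
      · intro y hy
        simp only [Finset.mem_filter, Finset.mem_range] at hy
        have h := (cond_iff y).mp hy.2
        have h2 := Nat.div_add_mod y c'
        have h4 : r0 + y / c' * c' = y := by
          have h3 := Nat.mul_comm c' (y / c')
          omega
        show _ = e c (m * ((g*a:ℕ):ℤ) + n * ((r0 + y / c' * c' : ℕ) : ℤ))
        rw [h4]
    rw [reindex]
    -- evaluate geometric part
    have expand : ∀ s : ℕ, s ∈ Finset.range g →
        e c (m * ((g * a : ℕ) : ℤ) + n * ((r0 + s * c' : ℕ) : ℤ))
        = e c (m * ((g*a:ℕ):ℤ) + n * r0) * e c ((c':ℤ) * (n * s)) := by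
      intro s _
      rw [← sel_e_add]
      congr 1
      push_cast
      ring
    rw [Finset.sum_congr rfl expand, ← Finset.mul_sum]
    have hdiv : ∀ s:ℕ, e c ((c':ℤ) * (n * s)) = e g (n * s) := by
      intro s
      rw [sel_e_div c c' ⟨g, by rw [hc]; ring⟩ hc']
      congr 1
      rw [hc, Nat.mul_div_cancel _ hc']
    simp only [hdiv]
    rw [sel_sum_e g hg n]
    by_cases hn : (g:ℤ) ∣ n
    · obtain ⟨n', rfl⟩ := hn
      rw [if_pos (dvd_mul_right (g:ℤ) n'), if_pos ⟨dvd_mul_right (g:ℤ) k', dvd_mul_right (g:ℤ) n'⟩]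
      have hdv : ((g:ℤ)*k') * ((g:ℤ)*n') / (g:ℤ)^2 = k' * n' := by
        rw [show ((g:ℤ)*k') * ((g:ℤ)*n') = (g:ℤ)^2 * (k'*n') by ring]
        exact Int.mul_ediv_cancel_left _ (pow_ne_zero _ (by exact_mod_cast hg.ne'))
      rw [hdv]
      have e1 : e c (m * ((g*a:ℕ):ℤ) + ((g:ℤ)*n') * r0) = e c' (m*a + n'*r0) := by
        rw [show (m * ((g*a:ℕ):ℤ) + ((g:ℤ)*n') * r0) = (g:ℤ) * (m*a + n'*r0) by push_cast; ring]
        rw [sel_e_div c g ⟨c', hc⟩ hg, hc, Nat.mul_div_cancel_left _ hg]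
      have e2 : e c' (m*a + n'*r0) = e c' (m*(a:ℤ) + (k'*n') * (ainv:ℤ)) := by
        refine sel_e_congr c' hc' ?_
        refine Int.ModEq.add_left _ ?_
        calc (n':ℤ) * r0 ≡ n' * y0 [ZMOD c'] := hr0mod.mul_left _
          _ = (k'*n') * ainv := by rw [hy0]; ring
      rw [e1, e2]
      ring
    · rw [if_neg hn, if_neg (by tauto), mul_zero]
  · -- g does not divide k : all terms vanish
    rw [if_neg (by tauto)]
    refine Finset.sum_eq_zero fun y hy => ?_
    rw [if_neg]
    intro hcond
    apply hk
    have : (((g * a : ℕ) : ℤ) * (y : ℕ)) ≡ k [ZMOD c] := hcond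
    obtain ⟨t, ht⟩ := Int.modEq_iff_dvd.mp this
    refine ⟨a * y + c' * t, ?_⟩
    have : (k : ℤ) = ((g*a:ℕ):ℤ) * y + (c:ℤ) * t := by linarith [ht]
    rw [this, hc]
    push_cast
    ring

lemma sel_fiber_sum (g c' : ℕ) (hg : 0 < g) (hc' : 0 < c') (k m n : ℤ) :
    ∑ x ∈ (Finset.range (g * c')).filter (fun x => Nat.gcd x (g * c') = g),
      ∑ y ∈ Finset.range (g * c'),
        (if ((x : ℤ) * y) % (g * c' : ℕ) = k % (g * c' : ℕ) then e (g * c') (m * x + n * y) else 0)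
    = if (g:ℤ) ∣ k ∧ (g:ℤ) ∣ n then (g:ℂ) * Kl m (k * n / (g:ℤ)^2) c' else 0 := by
  have key : ∑ x ∈ (Finset.range (g * c')).filter (fun x => Nat.gcd x (g * c') = g),
      ∑ y ∈ Finset.range (g * c'),
        (if ((x : ℤ) * y) % (g * c' : ℕ) = k % (g * c' : ℕ) then e (g * c') (m * x + n * y) else 0)
      = ∑ a ∈ (Finset.range c').filter (fun a => Nat.Coprime a c'),
        ∑ y ∈ Finset.range (g * c'),
          (if (((g * a : ℕ) : ℤ) * y) % (g * c' : ℕ) = k % (g * c' : ℕ)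
            then e (g * c') (m * ((g * a : ℕ) : ℤ) + n * y) else 0) := by
    refine Finset.sum_nbij' (fun x => x / g) (fun a => g * a) ?_ ?_ ?_ ?_ ?_
    · intro x hx
      simp only [Finset.mem_filter, Finset.mem_range] at hx ⊢
      obtain ⟨hlt, hgcd⟩ := hx
      have hdvd : g ∣ x := hgcd ▸ Nat.gcd_dvd_left x (g*c')
      constructor
      · exact Nat.div_lt_of_lt_mul hlt
      · have h1 : Nat.gcd (g * (x / g)) (g * c') = g := by
          rw [Nat.mul_div_cancel' hdvd]; exact hgcd
        rw [Nat.gcd_mul_left] at h1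
        have h2 : 0 < Nat.gcd (x/g) c' := Nat.gcd_pos_of_pos_right _ hc'
        nlinarith [h1, hg, h2]
    · intro a ha
      simp only [Finset.mem_filter, Finset.mem_range] at ha ⊢
      constructor
      · exact mul_lt_mul_of_pos_left ha.1 hg
      · rw [Nat.gcd_mul_left, ha.2, mul_one]
    · intro x hx
      simp only [Finset.mem_filter, Finset.mem_range] at hx
      have hdvd : g ∣ x := hx.2 ▸ Nat.gcd_dvd_left x (g*c')
      exact Nat.mul_div_cancel' hdvd
    · intro a _
      exact Nat.mul_div_cancel_left _ hg
    · intro x hx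
      simp only [Finset.mem_filter, Finset.mem_range] at hx
      have hdvd : g ∣ x := hx.2 ▸ Nat.gcd_dvd_left x (g*c')
      rw [Nat.mul_div_cancel' hdvd]
  rw [key]
  have step : ∀ a ∈ (Finset.range c').filter (fun a => Nat.Coprime a c'),
      (∑ y ∈ Finset.range (g * c'),
        (if (((g * a : ℕ) : ℤ) * y) % (g * c' : ℕ) = k % (g * c' : ℕ)
          then e (g * c') (m * ((g * a : ℕ) : ℤ) + n * y) else 0))
      = if (g:ℤ) ∣ k ∧ (g:ℤ) ∣ n then
          (g:ℂ) * e c' (m * a + (k * n / (g:ℤ)^2) * (((a : ZMod c')⁻¹).val : ℤ)) else 0 := by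
    intro a ha
    simp only [Finset.mem_filter, Finset.mem_range] at ha
    exact sel_inner_sum g c' hg hc' k m n a ha.1 ha.2
  rw [Finset.sum_congr rfl step]
  split_ifs with h
  · rw [← Finset.mul_sum]; rfl
  · exact Finset.sum_const_zero

lemma sel_dvd_characterization (c : ℕ) (hc : 0 < c) (k n : ℤ) (g : ℕ) :
    g ∈ (Int.gcd k (Int.gcd n (c:ℤ))).divisors ↔ (g ∣ c ∧ (g:ℤ) ∣ k ∧ (g:ℤ) ∣ n) := by
  rw [Nat.mem_divisors]
  have hne : Int.gcd k (Int.gcd n (c:ℤ)) ≠ 0 := by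
    intro h
    rw [Int.gcd_eq_zero_iff] at h
    have h2 := h.2
    rw [Int.natCast_eq_zero, Int.gcd_eq_zero_iff] at h2
    exact hc.ne' (by exact_mod_cast h2.2)
  constructor
  · rintro ⟨hd, -⟩
    have h1 : (g:ℤ) ∣ k ∧ (g:ℤ) ∣ (Int.gcd n (c:ℤ) : ℤ) := by
      constructor
      · exact dvd_trans (Int.natCast_dvd_natCast.mpr hd |>.trans (Int.gcd_dvd_left _ _)) (dvd_refl _)
      · exact (Int.natCast_dvd_natCast.mpr hd).trans (Int.gcd_dvd_right _ _)
    refine ⟨?_, h1.1, ?_⟩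
    · have := h1.2.trans (Int.gcd_dvd_right (a := n) (b := (c:ℤ)))
      exact_mod_cast this
    · exact h1.2.trans (Int.gcd_dvd_left _ _)
  · rintro ⟨hdc, hdk, hdn⟩
    refine ⟨?_, hne⟩
    have h2 : (g:ℤ) ∣ (Int.gcd n (c:ℤ) : ℤ) := Int.dvd_coe_gcd hdn (by exact_mod_cast hdc)
    have h3 : (g:ℤ) ∣ (Int.gcd k (Int.gcd n (c:ℤ) : ℤ) : ℤ) := Int.dvd_coe_gcd hdk h2
    exact_mod_cast h3

lemma sel_master (c : ℕ) (hc : 0 < c) (k m n : ℤ) :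
    Xi k m n c = ∑ g ∈ (Int.gcd k (Int.gcd n (c:ℤ))).divisors,
      (g:ℂ) * Kl m (k * n / (g:ℤ)^2) (c / g) := by
  unfold Xi
  rw [← Finset.sum_fiberwise_of_maps_to (g := fun x => Nat.gcd x c) (t := c.divisors)
    (fun x _ => Nat.mem_divisors.mpr ⟨Nat.gcd_dvd_right x c, hc.ne'⟩)]
  have step : ∀ g ∈ c.divisors,
      (∑ x ∈ (Finset.range c).filter (fun x => Nat.gcd x c = g),
        ∑ y ∈ Finset.range c,
          (if ((x : ℤ) * y) % c = k % c then e c (m * x + n * y) else 0))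
      = if (g:ℤ) ∣ k ∧ (g:ℤ) ∣ n then (g:ℂ) * Kl m (k * n / (g:ℤ)^2) (c / g) else 0 := by
    intro g hg
    obtain ⟨hdvd, -⟩ := Nat.mem_divisors.mp hg
    have hgpos : 0 < g := Nat.pos_of_dvd_of_pos hdvd hc
    have hc' : 0 < c / g := Nat.div_pos (Nat.le_of_dvd hc hdvd) hgpos
    have hgc : c = g * (c / g) := (Nat.mul_div_cancel' hdvd).symm
    calc (∑ x ∈ (Finset.range c).filter (fun x => Nat.gcd x c = g),
        ∑ y ∈ Finset.range c,
          (if ((x : ℤ) * y) % c = k % c then e c (m * x + n * y) else 0))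
        = ∑ x ∈ (Finset.range (g * (c/g))).filter (fun x => Nat.gcd x (g * (c/g)) = g),
        ∑ y ∈ Finset.range (g * (c/g)),
          (if ((x : ℤ) * y) % (g * (c/g) : ℕ) = k % (g * (c/g) : ℕ)
            then e (g * (c/g)) (m * x + n * y) else 0) := by rw [← hgc]
      _ = _ := sel_fiber_sum g (c/g) hgpos hc' k m n
  rw [Finset.sum_congr rfl step, ← Finset.sum_filter]
  apply Finset.sum_congr _ (fun _ _ => rfl)
  ext g
  rw [Finset.mem_filter, Nat.mem_divisors, sel_dvd_characterization c hc k n g]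
  constructor
  · rintro ⟨⟨h1, -⟩, h2, h3⟩; exact ⟨h1, h2, h3⟩
  · rintro ⟨h1, h2, h3⟩; exact ⟨⟨h1, hc.ne'⟩, h2, h3⟩

lemma sel_Xi_swap (k m n : ℤ) (c : ℕ) : Xi k m n c = Xi k n m c := by
  unfold Xi
  rw [Finset.sum_comm]
  refine Finset.sum_congr rfl fun y _ => Finset.sum_congr rfl fun x _ => ?_
  rw [show ((x:ℤ) * y) = (y:ℤ) * x from mul_comm _ _,
    show (m * (x:ℤ) + n * y) = (n * (y:ℤ) + m * x) from add_comm _ _]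

lemma sel_lemA (c : ℕ) (hc : 0 < c) (m n : ℤ) : Kl m n c = Xi n m 1 c := by
  rw [sel_master c hc n m 1]
  simp [Int.gcd]

theorem selberg_identity (c : ℕ) (hc : 0 < c) (m n : ℤ) :
    Kl m n c = ∑ d ∈ (Int.gcd m (Int.gcd n c)).divisors,
      (d : ℂ) * Kl (m * n / (d : ℤ) ^ 2) 1 (c / d) := by
  rw [sel_lemA c hc m n, sel_Xi_swap, sel_master c hc n 1 m]
  have hidx : Int.gcd n ((Int.gcd m (c:ℤ) : ℕ) : ℤ) = Int.gcd m ((Int.gcd n (c:ℤ) : ℕ) : ℤ) := by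
    simp only [Int.gcd, Int.natAbs_natCast]
    rw [← Nat.gcd_assoc, Nat.gcd_comm n.natAbs m.natAbs, Nat.gcd_assoc]
  rw [hidx]
  refine Finset.sum_congr rfl fun d _ => ?_
  rw [sel_Kl_symm, mul_comm n m]
end

section
/- For positive integers $c$ and integers $m,n,k$, define $\Xi_k(m,n;c)=\sum_{x,y \bmod c,\ xy\equiv k \bmod c} e((mx+ny)/c)$. Then $\Xi_k(m,n;c)=\sum_{d\mid(m,n,c)} d\, S(mn/d^2, k; c/d)$. -/
open Finset

lemma e_add (c : ℕ) (a b : ℤ) : e c (a + b) = e c a * e c b := by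
  rw [e, e, e, ← Complex.exp_add]
  congr 1
  push_cast
  ring

lemma e_int_mul (c : ℕ) (t : ℤ) (hc : 0 < c) : e c (c * t) = 1 := by
  rw [e]
  have hc' : (c : ℂ) ≠ 0 := by exact_mod_cast hc.ne'
  rw [show 2 * (Real.pi:ℂ) * Complex.I * (((c:ℤ) * t : ℤ) : ℂ) / c = t * (2 * Real.pi * Complex.I) by
    push_cast; field_simp]
  exact Complex.exp_int_mul_two_pi_mul_I t

lemma e_dvd_one (c : ℕ) (hc : 0 < c) {x : ℤ} (h : (c:ℤ) ∣ x) : e c x = 1 := by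
  obtain ⟨t, rfl⟩ := h
  exact e_int_mul c t hc

lemma e_congr (c : ℕ) (hc : 0 < c) {a b : ℤ} (h : (c:ℤ) ∣ a - b) : e c a = e c b := by
  obtain ⟨t, ht⟩ := h
  have : a = b + c * t := by linarith
  rw [this, e_add, e_int_mul c t hc, mul_one]

lemma e_pow (c : ℕ) (u : ℤ) (t : ℕ) : e c (t * u) = (e c u) ^ t := by
  rw [e, e, ← Complex.exp_nat_mul]
  congr 1
  push_cast
  ring

lemma e_eq_one_iff (c : ℕ) (hc : 0 < c) (u : ℤ) : e c u = 1 ↔ (c:ℤ) ∣ u := by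
  rw [e, Complex.exp_eq_one_iff]
  have hc' : (c : ℂ) ≠ 0 := by exact_mod_cast hc.ne'
  have hpi : (Real.pi : ℂ) ≠ 0 := by exact_mod_cast Real.pi_ne_zero
  constructor
  · rintro ⟨n, hn⟩
    refine ⟨n, ?_⟩
    have h : (u : ℂ) = n * c := by
      field_simp at hn
      have hI := Complex.I_ne_zero
      have h2 : (2:ℂ) ≠ 0 := two_ne_zero
      have key : (2 * (Real.pi:ℂ) * Complex.I) * u = (2 * (Real.pi:ℂ) * Complex.I) * (n * c) := by
        rw [hn]; ring
      exact mul_left_cancel₀ (mul_ne_zero (mul_ne_zero h2 hpi) hI) key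
    have : u = (n * c : ℤ) := by exact_mod_cast h
    rw [this]; ring
  · rintro ⟨n, rfl⟩
    refine ⟨n, ?_⟩
    push_cast
    field_simp

lemma e_sum_orth (c : ℕ) (hc : 0 < c) (u : ℤ) :
    ∑ t ∈ Finset.range c, e c ((t:ℤ) * u) = if (c:ℤ) ∣ u then (c:ℂ) else 0 := by
  have : ∀ t ∈ Finset.range c, e c ((t:ℤ) * u) = (e c u) ^ t := fun t _ => e_pow c u t
  rw [Finset.sum_congr rfl this]
  by_cases h : e c u = 1
  · simp [h, (e_eq_one_iff c hc u).mp h]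
  · rw [geom_sum_eq h, if_neg (fun hd => h ((e_eq_one_iff c hc u).mpr hd))]
    have : (e c u) ^ c = 1 := by
      rw [← e_pow, (e_eq_one_iff c hc _).mpr ⟨u, rfl⟩]
    simp [this]

lemma sum_range_mul (q d : ℕ) (hq : 0 < q) (f : ℕ → ℂ) :
    ∑ x ∈ range (q*d), f x = ∑ p ∈ range q ×ˢ range d, f (p.1 + q * p.2) := by
  refine Finset.sum_nbij' (i := fun x => (x % q, x / q)) (j := fun p => p.1 + q * p.2)
    ?_ ?_ ?_ ?_ ?_
  · intro x hx
    simp only [mem_range, mem_product] at *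
    exact ⟨Nat.mod_lt _ hq, (Nat.div_lt_iff_lt_mul hq).mpr (by rwa [mul_comm] at hx)⟩
  · intro p hp
    simp only [mem_range, mem_product] at *
    calc p.1 + q * p.2 < q + q * p.2 := by omega
    _ = q * (p.2 + 1) := by ring
    _ ≤ q * d := Nat.mul_le_mul_left q hp.2
  · intro x _; exact Nat.mod_add_div x q
  · intro p hp
    simp only [mem_range, mem_product] at hp
    have h1 : (p.1 + q * p.2) % q = p.1 := by
      rw [Nat.add_mul_mod_self_left, Nat.mod_eq_of_lt hp.1]
    have h2 : (p.1 + q * p.2) / q = p.2 := by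
      rw [Nat.add_mul_div_left _ _ hq, Nat.div_eq_of_lt hp.1, zero_add]
    simp [h1, h2]
  · intro x _; rw [Nat.mod_add_div x q]

lemma sum_range_by_gcd (c : ℕ) (hc : 0 < c) (F : ℕ → ℂ) :
    ∑ t ∈ range c, F t
      = ∑ d ∈ c.divisors, ∑ s ∈ (range (c/d)).filter (fun s => Nat.Coprime s (c/d)), F (d * s) := by
  rw [← Finset.sum_sigma c.divisors (fun d => (range (c/d)).filter (fun s => Nat.Coprime s (c/d))) (fun p => F (p.1 * p.2))]
  refine Finset.sum_nbij' (i := fun t => ⟨Nat.gcd t c, t / Nat.gcd t c⟩)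
    (j := fun p => p.1 * p.2) ?_ ?_ ?_ ?_ ?_
  · intro t ht
    simp only [mem_range] at ht
    have hg : 0 < Nat.gcd t c := Nat.gcd_pos_of_pos_right _ hc
    simp only [Finset.mem_sigma, Nat.mem_divisors, mem_filter, mem_range]
    refine ⟨⟨Nat.gcd_dvd_right t c, hc.ne'⟩, ?_, Nat.coprime_div_gcd_div_gcd hg⟩
    exact Nat.div_lt_div_of_lt_of_dvd (Nat.gcd_dvd_right t c) ht
  · intro p hp
    simp only [Finset.mem_sigma, Nat.mem_divisors, mem_filter, mem_range] at hp
    obtain ⟨⟨hd, _⟩, hs, _⟩ := hp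
    have hdpos : 0 < p.1 := Nat.pos_of_dvd_of_pos hd hc
    simp only [mem_range]
    calc p.1 * p.2 < p.1 * (c / p.1) := (mul_lt_mul_iff_right₀ hdpos).mpr hs
    _ = c := Nat.mul_div_cancel' hd
  · intro t ht
    exact Nat.mul_div_cancel' (Nat.gcd_dvd_left t c)
  · intro p hp
    simp only [Finset.mem_sigma, Nat.mem_divisors, mem_filter, mem_range] at hp
    obtain ⟨⟨hd, _⟩, hs, hcop⟩ := hp
    have hdpos : 0 < p.1 := Nat.pos_of_dvd_of_pos hd hc
    have hg : Nat.gcd (p.1 * p.2) c = p.1 := by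
      conv_lhs => rw [← Nat.mul_div_cancel' hd]
      rw [Nat.gcd_mul_left, Nat.Coprime.gcd_eq_one hcop, mul_one]
    ext
    · simp [hg]
    · simp [hg, Nat.mul_div_cancel_left _ hdpos]
  · intro t ht
    simp [Nat.mul_div_cancel' (Nat.gcd_dvd_left t c)]

lemma e_scale (q d : ℕ) (hq : 0 < q) (z : ℤ) : e (q*d) ((q:ℤ) * z) = e d z := by
  rw [e, e]
  congr 1
  have hq' : (q:ℂ) ≠ 0 := Nat.cast_ne_zero.mpr hq.ne'
  push_cast
  by_cases hd : (d:ℂ) = 0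
  · rw [hd, mul_zero, div_zero, div_zero]
  · field_simp

-- the inverse: basic facts
lemma sbar_mul (q : ℕ) (hq : 0 < q) (s : ℕ) (hs : Nat.Coprime s q) :
    (q:ℤ) ∣ ((s:ℤ) * (((s : ZMod q)⁻¹).val : ℤ) - 1) := by
  haveI : NeZero q := ⟨hq.ne'⟩
  have hunit : IsUnit (s : ZMod q) := (ZMod.isUnit_iff_coprime s q).mpr hs
  rw [← ZMod.intCast_zmod_eq_zero_iff_dvd]
  push_cast
  rw [ZMod.natCast_val, ZMod.cast_id]
  rw [ZMod.mul_inv_of_unit _ hunit]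
  ring

lemma inner_x (q d : ℕ) (hq : 0 < q) (hd : 0 < d) (m n : ℤ) (s : ℕ) (hs : Nat.Coprime s q) :
    ∑ x ∈ range (q*d), (if ((q:ℤ)*d) ∣ ((d:ℤ)*s*x + n) then e (q*d) (m*x) else 0)
      = if (d:ℤ) ∣ n ∧ (d:ℤ) ∣ m then
          (d:ℂ) * e q ((m/d) * (-(n/d) * (((s : ZMod q)⁻¹).val : ℤ))) else 0 := by
  haveI : NeZero q := ⟨hq.ne'⟩
  set sb : ℕ := ((s : ZMod q)⁻¹).val with hsb
  have hunit : IsUnit (s : ZMod q) := (ZMod.isUnit_iff_coprime s q).mpr hs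
  have hssb : (q:ℤ) ∣ ((s:ℤ) * (sb:ℤ) - 1) := sbar_mul q hq s hs
  by_cases hn : (d:ℤ) ∣ n
  · obtain ⟨n', rfl⟩ := hn
    -- condition simplification
    have hcond : ∀ x : ℕ, ((q:ℤ)*d) ∣ ((d:ℤ)*s*x + (d:ℤ)*n') ↔ (q:ℤ) ∣ ((s:ℤ)*x + n') := by
      intro x
      have hd' : (d:ℤ) ≠ 0 := Int.natCast_ne_zero.mpr hd.ne'
      rw [show ((d:ℤ)*s*x + (d:ℤ)*n') = (d:ℤ) * ((s:ℤ)*x + n') by ring,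
        show ((q:ℤ)*d) = (d:ℤ)*q by ring]
      exact mul_dvd_mul_iff_left hd'
    -- unique solution r₀
    set z : ZMod q := -(n' : ZMod q) * (s : ZMod q)⁻¹ with hz
    have hkey : ∀ r : ℕ, ((q:ℤ) ∣ ((s:ℤ)*r + n')) ↔ ((r : ZMod q) = z) := by
      intro r
      rw [← ZMod.intCast_zmod_eq_zero_iff_dvd]
      push_cast
      constructor
      · intro h
        have h2 := congrArg (fun w : ZMod q => w * (s : ZMod q)⁻¹) h
        simp only [add_mul, zero_mul] at h2
        rw [mul_comm ((s:ZMod q)) ((r:ZMod q)), mul_assoc, ZMod.mul_inv_of_unit _ hunit,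
          mul_one] at h2
        rw [hz]
        linear_combination h2
      · intro h
        rw [h, hz]
        rw [show (s:ZMod q) * (-(n' : ZMod q) * (s : ZMod q)⁻¹) + (n' : ZMod q)
          = -((s:ZMod q) * (s : ZMod q)⁻¹) * n' + n' by ring, ZMod.mul_inv_of_unit _ hunit]
        ring
    have hr0lt : z.val < q := ZMod.val_lt z
    -- rewrite: for r ∈ range q, condition iff r = z.val
    have hkey2 : ∀ r : ℕ, r < q → (((q:ℤ) ∣ ((s:ℤ)*r + n')) ↔ r = z.val) := by
      intro r hr
      rw [hkey r]
      constructor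
      · intro h; rw [← h, ZMod.val_cast_of_lt hr]
      · intro h; rw [h, ZMod.natCast_val, ZMod.cast_id]
    have main : ∑ x ∈ range (q*d), (if ((q:ℤ)*d) ∣ ((d:ℤ)*s*x + (d:ℤ)*n') then e (q*d) (m*x) else 0)
        = e (q*d) (m * z.val) * (if (d:ℤ) ∣ m then (d:ℂ) else 0) := by
      rw [sum_range_mul q d hq, Finset.sum_product]
      have step : ∀ r ∈ range q, ∀ j ∈ range d,
          (if ((q:ℤ)*d) ∣ ((d:ℤ)*s*(r + q*j) + (d:ℤ)*n') then e (q*d) (m*(r + q*j)) else 0)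
          = if r = z.val then e (q*d) (m*r) * e d ((j:ℤ)*m) else 0 := by
        intro r hr j hj
        simp only [mem_range] at hr hj
        have hc1 : ((q:ℤ)*d) ∣ ((d:ℤ)*s*(r + q*j) + (d:ℤ)*n') ↔ (q:ℤ) ∣ ((s:ℤ)*r + n') := by
          rw [show ((d:ℤ)*s*((r:ℤ) + (q:ℤ)*(j:ℤ)) + (d:ℤ)*n')
              = ((q:ℤ)*d) * ((s:ℤ)*j) + ((d:ℤ)*s*(r:ℤ) + (d:ℤ)*n') by push_cast; ring]
          rw [Int.dvd_add_right ⟨(s:ℤ)*j, rfl⟩]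
          exact hcond r
        simp only [hc1]
        by_cases hcr : r = z.val
        · rw [if_pos ((hkey2 r hr).mpr hcr), if_pos hcr]
          rw [show (m*((r:ℤ) + (q:ℤ)*(j:ℤ)) : ℤ) = m*(r:ℤ) + (q:ℤ)*((j:ℤ)*m) by ring,
            e_add, e_scale q d hq]
        · rw [if_neg (fun h => hcr ((hkey2 r hr).mp h)), if_neg hcr]
      calc ∑ r ∈ range q, ∑ j ∈ range d,
            (if ((q:ℤ)*d) ∣ ((d:ℤ)*s*(r + q*j) + (d:ℤ)*n') then e (q*d) (m*(r + q*j)) else 0)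
          = ∑ r ∈ range q, ∑ j ∈ range d,
            (if r = z.val then e (q*d) (m*r) * e d ((j:ℤ)*m) else 0) := by
            refine sum_congr rfl fun r hr => sum_congr rfl fun j hj => step r hr j hj
        _ = ∑ r ∈ range q, (if r = z.val then e (q*d) (m*r) * (∑ j ∈ range d, e d ((j:ℤ)*m)) else 0) := by
            refine sum_congr rfl fun r hr => ?_
            by_cases hcr : r = z.val
            · simp only [if_pos hcr, Finset.mul_sum]
            · simp only [if_neg hcr, Finset.sum_const_zero]
        _ = e (q*d) (m * z.val) * (if (d:ℤ) ∣ m then (d:ℂ) else 0) := by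
            rw [Finset.sum_ite_eq' (range q) z.val
              (fun r => e (q*d) (m*(r:ℕ)) * (∑ j ∈ range d, e d ((j:ℤ)*m))),
              if_pos (mem_range.mpr hr0lt), e_sum_orth d hd m]
    rw [main]
    by_cases hm : (d:ℤ) ∣ m
    · obtain ⟨m', rfl⟩ := hm
      rw [if_pos (show ((d:ℤ) ∣ (d:ℤ)*n' ∧ (d:ℤ) ∣ (d:ℤ)*m') from ⟨⟨n', rfl⟩, ⟨m', rfl⟩⟩),
        if_pos (show ((d:ℤ) ∣ (d:ℤ)*m') from ⟨m', rfl⟩)]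
      have hd' : (d:ℤ) ≠ 0 := Int.natCast_ne_zero.mpr hd.ne'
      rw [Int.mul_ediv_cancel_left _ hd', Int.mul_ediv_cancel_left _ hd']
      have hsc : e (q*d) ((d:ℤ)*m' * (z.val:ℤ)) = e q (m' * (z.val:ℤ)) := by
        rw [show (q*d) = (d*q) by ring, show ((d:ℤ)*m' * (z.val:ℤ)) = (d:ℤ) * (m' * z.val) by ring,
          e_scale d q hd]
      rw [hsc, mul_comm]
      congr 1
      refine e_congr q hq ?_
      rw [show m' * (z.val:ℤ) - m' * (-n' * (sb:ℤ)) = m' * ((z.val:ℤ) - (-n' * (sb:ℤ))) by ring]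
      refine Dvd.dvd.mul_left ?_ m'
      rw [← ZMod.intCast_zmod_eq_zero_iff_dvd]
      push_cast
      rw [ZMod.natCast_val, ZMod.cast_id, ZMod.natCast_val, ZMod.cast_id, hz]
      ring
    · rw [if_neg hm, if_neg (fun h => hm h.2), mul_zero]
  · -- d ∤ n : all terms vanish
    rw [if_neg (fun h => hn h.1)]
    refine Finset.sum_eq_zero fun x _ => ?_
    rw [if_neg]
    intro hdvd
    apply hn
    have h1 : (d:ℤ) ∣ ((d:ℤ)*s*x + n) := dvd_trans ⟨q, by ring⟩ hdvd
    have h2 : (d:ℤ) ∣ (d:ℤ)*s*x := ⟨(s:ℤ)*x, by ring⟩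
    simpa using (Int.dvd_sub h1 h2)

lemma step1 (c : ℕ) (hc : 0 < c) (m n k : ℤ) :
    Xi k m n c = ∑ t ∈ range c, ∑ x ∈ range c,
      if (c:ℤ) ∣ ((t:ℤ) * x + n) then e c (m * x - t * k) else 0 := by
  have hcC : (c:ℂ) ≠ 0 := Nat.cast_ne_zero.mpr hc.ne'
  apply mul_left_cancel₀ hcC
  calc (c:ℂ) * Xi k m n c
      = ∑ x ∈ range c, ∑ y ∈ range c,
          (if (c:ℤ) ∣ ((x:ℤ)*y - k) then (c:ℂ) else 0) * e c (m*x+n*y) := by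
        rw [Xi, Finset.mul_sum]
        refine sum_congr rfl fun x _ => ?_
        rw [Finset.mul_sum]
        refine sum_congr rfl fun y _ => ?_
        have hiff : ((x:ℤ)*y) % c = k % c ↔ (c:ℤ) ∣ ((x:ℤ)*y - k) := by
          constructor
          · intro h
            have : ((x:ℤ)*y) ≡ k [ZMOD (c:ℤ)] := h
            exact (dvd_sub_comm).mp (Int.ModEq.dvd this)
          · intro h
            have : ((x:ℤ)*y) ≡ k [ZMOD (c:ℤ)] := (Int.modEq_iff_dvd).mpr (dvd_sub_comm.mp h)
            exact this
        by_cases h : ((x:ℤ)*y) % c = k % c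
        · rw [if_pos h, if_pos (hiff.mp h)]
        · rw [if_neg h, if_neg (fun hd => h (hiff.mpr hd)), zero_mul, mul_zero]
    _ = ∑ x ∈ range c, ∑ y ∈ range c, ∑ t ∈ range c,
          e c (((t:ℤ) * ((x:ℤ)*y - k)) + (m*x+n*y)) := by
        refine sum_congr rfl fun x _ => sum_congr rfl fun y _ => ?_
        rw [← e_sum_orth c hc, Finset.sum_mul]
        exact sum_congr rfl fun t _ => (e_add c _ _).symm
    _ = ∑ x ∈ range c, ∑ t ∈ range c, ∑ y ∈ range c,
          e c (m*x - t*k) * e c (((t:ℤ)*x+n)*y) := by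
        refine sum_congr rfl fun x _ => ?_
        rw [Finset.sum_comm]
        refine sum_congr rfl fun t _ => sum_congr rfl fun y _ => ?_
        rw [← e_add]
        congr 1
        ring
    _ = ∑ t ∈ range c, ∑ x ∈ range c, ∑ y ∈ range c,
          e c (m*x - t*k) * e c (((t:ℤ)*x+n)*y) := Finset.sum_comm
    _ = ∑ t ∈ range c, ∑ x ∈ range c,
          e c (m*x - t*k) * (if (c:ℤ) ∣ ((t:ℤ)*x+n) then (c:ℂ) else 0) := by
        refine sum_congr rfl fun t _ => sum_congr rfl fun x _ => ?_
        rw [← Finset.mul_sum, ← e_sum_orth c hc]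
        congr 1
        exact sum_congr rfl fun y _ => by rw [mul_comm ((t:ℤ)*x+n) (y:ℤ)]
    _ = (c:ℂ) * ∑ t ∈ range c, ∑ x ∈ range c,
          (if (c:ℤ) ∣ ((t:ℤ) * x + n) then e c (m * x - t * k) else 0) := by
        rw [Finset.mul_sum]
        refine sum_congr rfl fun t _ => ?_
        rw [Finset.mul_sum]
        refine sum_congr rfl fun x _ => ?_
        by_cases h : (c:ℤ) ∣ ((t:ℤ)*x+n)
        · rw [if_pos h, if_pos h]; ring
        · rw [if_neg h, if_neg h, mul_zero, mul_zero]

lemma s_bij (q : ℕ) (hq : 0 < q) (M k : ℤ) :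
    ∑ s ∈ (range q).filter (fun s => Nat.Coprime s q),
      e q (-((s:ℤ)*k) + M * (-((((s : ZMod q)⁻¹).val : ℕ) : ℤ)))
    = ∑ a ∈ (range q).filter (fun a => Nat.Coprime a q),
      e q (M * a + k * ((((a : ZMod q)⁻¹).val : ℕ) : ℤ)) := by
  haveI : NeZero q := ⟨hq.ne'⟩
  have phi_mem : ∀ s ∈ (range q).filter (fun s => Nat.Coprime s q),
      (-(s : ZMod q)⁻¹).val ∈ (range q).filter (fun a => Nat.Coprime a q) := by
    intro s hsmem
    simp only [mem_filter, mem_range] at hsmem ⊢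
    have hunit : IsUnit (s : ZMod q) := (ZMod.isUnit_iff_coprime s q).mpr hsmem.2
    have hinv : IsUnit (-(s : ZMod q)⁻¹) := by
      refine IsUnit.neg (IsUnit.of_mul_eq_one _ (ZMod.inv_mul_of_unit _ hunit))
    refine ⟨ZMod.val_lt _, ?_⟩
    have := ZMod.val_coe_unit_coprime hinv.unit
    rwa [hinv.unit_spec] at this
  have phi_cast : ∀ s : ℕ, (((-(s : ZMod q)⁻¹).val : ℕ) : ZMod q) = -(s : ZMod q)⁻¹ := by
    intro s; rw [ZMod.natCast_val, ZMod.cast_id]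
  have phi_inv : ∀ s ∈ (range q).filter (fun s => Nat.Coprime s q),
      (-(((-(s : ZMod q)⁻¹).val : ℕ) : ZMod q)⁻¹).val = s := by
    intro s hsmem
    simp only [mem_filter, mem_range] at hsmem
    have hunit : IsUnit (s : ZMod q) := (ZMod.isUnit_iff_coprime s q).mpr hsmem.2
    rw [phi_cast s]
    have : (-(s : ZMod q)⁻¹)⁻¹ = -(s : ZMod q) := by
      refine ZMod.inv_eq_of_mul_eq_one q _ _ ?_
      rw [show (-(s : ZMod q)⁻¹) * (-(s:ZMod q)) = (s : ZMod q)⁻¹ * s by ring,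
        ZMod.inv_mul_of_unit _ hunit]
    rw [this, neg_neg, ZMod.val_cast_of_lt hsmem.1]
  refine Finset.sum_nbij' (i := fun s => (-(s : ZMod q)⁻¹).val)
    (j := fun a => (-(a : ZMod q)⁻¹).val) phi_mem phi_mem phi_inv phi_inv ?_
  intro s hsmem
  simp only [mem_filter, mem_range] at hsmem
  have hunit : IsUnit (s : ZMod q) := (ZMod.isUnit_iff_coprime s q).mpr hsmem.2
  have habar : ((-(s : ZMod q)⁻¹)⁻¹) = -(s : ZMod q) := by
    refine ZMod.inv_eq_of_mul_eq_one q _ _ ?_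
    rw [show (-(s : ZMod q)⁻¹) * (-(s:ZMod q)) = (s : ZMod q)⁻¹ * s by ring,
      ZMod.inv_mul_of_unit _ hunit]
  refine e_congr q hq ?_
  rw [← ZMod.intCast_zmod_eq_zero_iff_dvd]
  push_cast
  simp only [ZMod.natCast_val, ZMod.cast_id', id_eq, ZMod.cast_id]
  rw [habar]
  ring

lemma per_d (q d : ℕ) (hq : 0 < q) (hd : 0 < d) (m n k : ℤ) :
    ∑ s ∈ (range q).filter (fun s => Nat.Coprime s q),
      ∑ x ∈ range (q*d),
        (if ((q*d : ℕ):ℤ) ∣ (((d*s : ℕ):ℤ)*x + n) then e (q*d) (m*x - ((d*s:ℕ):ℤ)*k) else 0)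
    = if (d:ℤ) ∣ n ∧ (d:ℤ) ∣ m then (d:ℂ) * Kl ((m/d)*(n/d)) k q else 0 := by
  have hscale : ∀ z : ℤ, e (q*d) ((d:ℤ)*z) = e q z := by
    intro z
    rw [show q*d = d*q from mul_comm q d]
    exact e_scale d q hd z
  have hstep : ∀ s ∈ (range q).filter (fun s => Nat.Coprime s q),
      (∑ x ∈ range (q*d),
        (if ((q*d : ℕ):ℤ) ∣ (((d*s : ℕ):ℤ)*x + n) then e (q*d) (m*x - ((d*s:ℕ):ℤ)*k) else 0))
      = e q (-((s:ℤ)*k)) *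
        (if (d:ℤ) ∣ n ∧ (d:ℤ) ∣ m then
          (d:ℂ) * e q ((m/d) * (-(n/d) * (((s : ZMod q)⁻¹).val : ℤ))) else 0) := by
    intro s hsmem
    simp only [mem_filter, mem_range] at hsmem
    have h1 : ∀ x : ℕ,
        (if ((q*d : ℕ):ℤ) ∣ (((d*s : ℕ):ℤ)*x + n) then e (q*d) (m*x - ((d*s:ℕ):ℤ)*k) else 0)
        = (if ((q:ℤ)*d) ∣ ((d:ℤ)*s*x + n) then e (q*d) (m*x) else 0) * e q (-((s:ℤ)*k)) := by
      intro x
      have hcast1 : ((q*d : ℕ):ℤ) = (q:ℤ)*d := by push_cast; ring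
      have hcast2 : (((d*s : ℕ):ℤ)*x + n) = ((d:ℤ)*s*x + n) := by push_cast; ring
      rw [hcast1, hcast2]
      by_cases hcond : ((q:ℤ)*d) ∣ ((d:ℤ)*s*x + n)
      · rw [if_pos hcond, if_pos hcond]
        rw [show (m*(x:ℤ) - ((d*s:ℕ):ℤ)*k) = m*(x:ℤ) + (d:ℤ)*(-((s:ℤ)*k)) by push_cast; ring,
          e_add, hscale (-((s:ℤ)*k))]
      · rw [if_neg hcond, if_neg hcond, zero_mul]
    rw [Finset.sum_congr rfl (fun x _ => h1 x), ← Finset.sum_mul, mul_comm]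
    congr 1
    exact inner_x q d hq hd m n s hsmem.2
  rw [Finset.sum_congr rfl hstep]
  by_cases hmn : (d:ℤ) ∣ n ∧ (d:ℤ) ∣ m
  · simp only [if_pos hmn]
    rw [Kl, ← s_bij q hq ((m/d)*(n/d)) k, Finset.mul_sum]
    refine Finset.sum_congr rfl fun s hs => ?_
    rw [show ((d:ℂ) * e q ((m/d) * (-(n/d) * (((s : ZMod q)⁻¹).val : ℤ))))
        = (d:ℂ) * e q ((m/d) * (-(n/d) * (((s : ZMod q)⁻¹).val : ℤ))) from rfl]
    rw [mul_comm ((d:ℂ)) _, ← mul_assoc, ← e_add]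
    rw [show (-((s:ℤ)*k) + ((m/d) * (-(n/d) * (((s : ZMod q)⁻¹).val : ℤ))))
      = (-((s:ℤ)*k) + ((m/d)*(n/d)) * (-((((s : ZMod q)⁻¹).val : ℕ) : ℤ))) by push_cast; ring]
    ring
  · simp only [if_neg hmn, mul_zero]
    exact Finset.sum_const_zero

theorem xi_selberg (c : ℕ) (hc : 0 < c) (m n k : ℤ) :
    Xi k m n c = ∑ d ∈ (Int.gcd m (Int.gcd n c)).divisors,
      (d : ℂ) * Kl (m * n / (d : ℤ) ^ 2) k (c / d) := by
  have hgc : Int.gcd m (Int.gcd n c) ∣ c := by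
    have h1 : ((Int.gcd m (Int.gcd n c) : ℕ):ℤ) ∣ ((Int.gcd n c : ℕ):ℤ) := Int.gcd_dvd_right _ _
    have h2 : ((Int.gcd n c : ℕ):ℤ) ∣ (c:ℤ) := Int.gcd_dvd_right _ _
    exact Int.natCast_dvd_natCast.mp (h1.trans h2)
  have hgne : Int.gcd m (Int.gcd n c) ≠ 0 := by
    intro h
    rw [Int.gcd_eq_zero_iff] at h
    have h2 : Int.gcd n c = 0 := by exact_mod_cast h.2
    rw [Int.gcd_eq_zero_iff] at h2
    exact (Int.natCast_ne_zero.mpr hc.ne') h2.2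
  rw [step1 c hc m n k,
    sum_range_by_gcd c hc (fun t => ∑ x ∈ range c,
      if (c:ℤ) ∣ ((t:ℤ) * x + n) then e c (m * x - t * k) else 0)]
  have hmain : ∀ d ∈ c.divisors,
      (∑ s ∈ (range (c/d)).filter (fun s => Nat.Coprime s (c/d)),
        ∑ x ∈ range c,
          (if (c:ℤ) ∣ (((d*s : ℕ):ℤ)*x + n) then e c (m*x - ((d*s:ℕ):ℤ)*k) else 0))
      = if (d:ℤ) ∣ n ∧ (d:ℤ) ∣ m then (d:ℂ) * Kl ((m/d)*(n/d)) k (c/d) else 0 := by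
    intro d hdmem
    obtain ⟨hdvd, _⟩ := Nat.mem_divisors.mp hdmem
    have hdpos : 0 < d := Nat.pos_of_dvd_of_pos hdvd hc
    set q := c / d with hqdef
    have hqpos : 0 < q := Nat.div_pos (Nat.le_of_dvd hc hdvd) hdpos
    have hqd : q * d = c := Nat.div_mul_cancel hdvd
    rw [← hqd]
    exact per_d q d hqpos hdpos m n k
  rw [Finset.sum_congr rfl hmain]
  rw [← Finset.sum_subset (Nat.divisors_subset_of_dvd hc.ne' hgc)
    (fun d hdc hdg => ?_)]
  · refine Finset.sum_congr rfl fun d hdmem => ?_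
    obtain ⟨hdg, _⟩ := Nat.mem_divisors.mp hdmem
    have hdgz : (d:ℤ) ∣ ((Int.gcd m (Int.gcd n c) : ℕ):ℤ) := Int.natCast_dvd_natCast.mpr hdg
    have hdm : (d:ℤ) ∣ m := hdgz.trans (Int.gcd_dvd_left _ _)
    have hdn : (d:ℤ) ∣ n := (hdgz.trans (Int.gcd_dvd_right _ _)).trans (Int.gcd_dvd_left _ _)
    rw [if_pos ⟨hdn, hdm⟩]
    congr 1
    obtain ⟨m', rfl⟩ := hdm
    obtain ⟨n', rfl⟩ := hdn
    have hd' : (d:ℤ) ≠ 0 := Int.natCast_ne_zero.mpr (Nat.pos_of_dvd_of_pos hdg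
      (Nat.pos_of_ne_zero hgne)).ne'
    rw [Int.mul_ediv_cancel_left _ hd', Int.mul_ediv_cancel_left _ hd',
      show ((d:ℤ)*m'*((d:ℤ)*n')) = (d:ℤ)^2*(m'*n') by ring,
      Int.mul_ediv_cancel_left _ (pow_ne_zero 2 hd')]
  · rw [if_neg]
    rintro ⟨hdn, hdm⟩
    obtain ⟨hdvd, _⟩ := Nat.mem_divisors.mp hdc
    have : (d:ℤ) ∣ ((Int.gcd m (Int.gcd n c) : ℕ):ℤ) :=
      Int.dvd_coe_gcd hdm (Int.dvd_coe_gcd hdn (Int.natCast_dvd_natCast.mpr hdvd))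
    exact hdg (Nat.mem_divisors.mpr ⟨Int.natCast_dvd_natCast.mp this, hgne⟩)
end
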